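/- Let n ≥ 1, let ω and W be symmetric real n×n matrices with ω·W = 1 (W is the inverse of ω), and let k₀ ∈ ℝ. On E = (Fin n → ℝ) × ℝ × (Fin n → ℝ) with points p = (x, c₀, c), define F_{ij}(p) = (1/2)·(k₀·(1 − exp(2c₀)) − Σ_{k,h} W_{kh}·c_k·c_h)·ω_{ij} + c_i·c_j, and the vector fields X_i : E → E by X_i(p) = (e_i, c_i, (F_{ji}(p))_{j}), where e_i is the i-th standard basis vector of Fin n → ℝ. Then for all i, j and every p ∈ E the Lie bracket is given by fderiv X_j p (X_i p) − fderiv X_i p (X_j p) = (0, 0, m ↦ −k₀·(c_i·ω_{mj} − c_j·ω_{mi})). In particular, if k₀ = 0 the vector fields X_1, …, X_n pairwise commute, so the GHSS Pfaff system with constant (flat) metric ω is involutive. -/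

import Mathlib

theorem ghss_aux (n : ℕ) (ω W : Matrix (Fin n) (Fin n) ℝ) (hW : W.IsSymm)
    (hWω : W * ω = 1) (c : Fin n → ℝ) (A : ℝ) (a : Fin n) :
    ∑ x : Fin n, ∑ y : Fin n,
      (W x y * c x * (A * ω y a + c y * c a) + c y * (W x y * (A * ω x a + c x * c a)))
      = 2 * A * c a + 2 * c a * ∑ k : Fin n, ∑ h : Fin n, W k h * c k * c h := by
  have h1 : ∀ x, (∑ y, W x y * ω y a) = if x = a then 1 else 0 := fun x => by
    rw [← Matrix.mul_apply, hWω, Matrix.one_apply]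
  have key1 : (∑ x : Fin n, ∑ y : Fin n, c x * (W x y * ω y a)) = c a := by
    calc (∑ x : Fin n, ∑ y : Fin n, c x * (W x y * ω y a))
        = ∑ x : Fin n, c x * ∑ y : Fin n, W x y * ω y a := by
          simp [Finset.mul_sum]
      _ = c a := by simp [h1]
  have key2 : (∑ x : Fin n, ∑ y : Fin n, c y * (W x y * ω x a)) = c a := by
    rw [Finset.sum_comm]
    have h2 : ∀ y, (∑ x, W x y * ω x a) = if y = a then 1 else 0 := fun y => by
      have : ∀ x, W x y * ω x a = W y x * ω x a := fun x => by rw [hW.apply]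
      simp_rw [this, ← Matrix.mul_apply, hWω, Matrix.one_apply]
    calc (∑ y : Fin n, ∑ x : Fin n, c y * (W x y * ω x a))
        = ∑ y : Fin n, c y * ∑ x : Fin n, W x y * ω x a := by
          simp [Finset.mul_sum]
      _ = c a := by simp [h2]
  calc ∑ x : Fin n, ∑ y : Fin n,
      (W x y * c x * (A * ω y a + c y * c a) + c y * (W x y * (A * ω x a + c x * c a)))
      = ∑ x : Fin n, ∑ y : Fin n,
        (A * (c x * (W x y * ω y a)) + A * (c y * (W x y * ω x a))
          + c a * (2 * (W x y * c x * c y))) :=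
        Finset.sum_congr rfl fun x _ => Finset.sum_congr rfl fun y _ => by ring
    _ = A * (∑ x : Fin n, ∑ y : Fin n, c x * (W x y * ω y a))
        + A * (∑ x : Fin n, ∑ y : Fin n, c y * (W x y * ω x a))
        + c a * (2 * ∑ x : Fin n, ∑ y : Fin n, W x y * c x * c y) := by
        simp only [Finset.sum_add_distrib, Finset.mul_sum]
    _ = 2 * A * c a + 2 * c a * ∑ k : Fin n, ∑ h : Fin n, W k h * c k * c h := by
        rw [key1, key2]; ring

open ContinuousLinearMap in
/-- The Lie bracket of the vector fields spanning the kernel of the GHSS Pfaff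
system with constant metric `ω` is `[X_i, X_j](p) = (0, 0, −k₀·(c_i ω_{·j} − c_j ω_{·i}))`;
in particular they commute when `k₀ = 0`. -/
theorem ghss_vector_fields_bracket
    (n : ℕ) (hn : 1 ≤ n)
    (ω W : Matrix (Fin n) (Fin n) ℝ) (hω : ω.IsSymm) (hW : W.IsSymm)
    (hωW : ω * W = 1) (k₀ : ℝ)
    (F : ((Fin n → ℝ) × ℝ × (Fin n → ℝ)) → Fin n → Fin n → ℝ)
    (hF : ∀ p i j, F p i j =
      (1/2) * (k₀ * (1 - Real.exp (2 * p.2.1)) - ∑ k, ∑ h, W k h * p.2.2 k * p.2.2 h) * ω i j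
      + p.2.2 i * p.2.2 j)
    (X : Fin n → ((Fin n → ℝ) × ℝ × (Fin n → ℝ)) → ((Fin n → ℝ) × ℝ × (Fin n → ℝ)))
    (hX : ∀ i p, X i p = (Pi.single i 1, p.2.2 i, fun j => F p j i)) :
    ∀ (i j : Fin n) (p : (Fin n → ℝ) × ℝ × (Fin n → ℝ)),
      fderiv ℝ (X j) p (X i p) - fderiv ℝ (X i) p (X j p) =
      (0, 0, fun m => -k₀ * (p.2.2 i * ω m j - p.2.2 j * ω m i)) := by
  have hWω : W * ω = 1 := by
    have h := congrArg Matrix.transpose hωW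
    rwa [Matrix.transpose_mul, hW, hω, Matrix.transpose_one] at h
  intro i j p
  have hc0 : HasFDerivAt (fun q : (Fin n → ℝ) × ℝ × (Fin n → ℝ) => q.2.1)
      ((fst ℝ ℝ (Fin n → ℝ)).comp (snd ℝ (Fin n → ℝ) (ℝ × (Fin n → ℝ)))) p :=
    hasFDerivAt_snd.fst
  have hc : ∀ k : Fin n, HasFDerivAt (fun q : (Fin n → ℝ) × ℝ × (Fin n → ℝ) => q.2.2 k)
      ((proj k).comp ((snd ℝ ℝ (Fin n → ℝ)).comp (snd ℝ (Fin n → ℝ) (ℝ × (Fin n → ℝ))))) p :=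
    fun k => by
      have hs : HasFDerivAt (fun q : (Fin n → ℝ) × ℝ × (Fin n → ℝ) => q.2.2)
          ((snd ℝ ℝ (Fin n → ℝ)).comp (snd ℝ (Fin n → ℝ) (ℝ × (Fin n → ℝ)))) p :=
        (hasFDerivAt_snd (p := p)).snd
      exact HasFDerivAt.comp (g := fun f : Fin n → ℝ => f k) p (hasFDerivAt_apply k p.2.2) hs
  have hXa : ∀ a : Fin n, HasFDerivAt (X a)
      (ContinuousLinearMap.prod 0
      (((proj a).comp ((snd ℝ ℝ (Fin n → ℝ)).comp (snd ℝ (Fin n → ℝ) (ℝ × (Fin n → ℝ))))).prod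
        (pi fun m =>
          ω m a •
              (1 / 2 : ℝ) •
                (k₀ • -(Real.exp (2 * p.2.1) • (2:ℝ) • (fst ℝ ℝ (Fin n → ℝ)).comp
                    (snd ℝ (Fin n → ℝ) (ℝ × (Fin n → ℝ)))) -
                  ∑ k : Fin n,
                    ∑ h : Fin n,
                      ((W k h * p.2.2 k) •
                          (proj h).comp ((snd ℝ ℝ (Fin n → ℝ)).comp
                            (snd ℝ (Fin n → ℝ) (ℝ × (Fin n → ℝ)))) +
                        p.2.2 h •
                          W k h • (proj k).comp ((snd ℝ ℝ (Fin n → ℝ)).comp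
                            (snd ℝ (Fin n → ℝ) (ℝ × (Fin n → ℝ)))))) +
            (p.2.2 m • (proj a).comp ((snd ℝ ℝ (Fin n → ℝ)).comp
                (snd ℝ (Fin n → ℝ) (ℝ × (Fin n → ℝ)))) +
              p.2.2 a • (proj m).comp ((snd ℝ ℝ (Fin n → ℝ)).comp
                (snd ℝ (Fin n → ℝ) (ℝ × (Fin n → ℝ))))))))
      p := by
    intro a
    have hfun : X a = (fun x : (Fin n → ℝ) × ℝ × (Fin n → ℝ) =>
        ((Pi.single a 1 : Fin n → ℝ), x.2.2 a, fun m =>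
          1 / 2 * (k₀ * (1 - Real.exp (2 * x.2.1))
              - ∑ k : Fin n, ∑ h : Fin n, W k h * x.2.2 k * x.2.2 h) * ω m a +
            x.2.2 m * x.2.2 a)) := by
      funext q
      rw [hX a q]
      simp only [hF]
    rw [hfun]
    exact HasFDerivAt.prodMk (hasFDerivAt_const (Pi.single a 1 : Fin n → ℝ) p)
      (HasFDerivAt.prodMk (hc a) (hasFDerivAt_pi.2 (fun m => by
        have h := (((((hc0.const_mul (2:ℝ)).exp.const_sub 1).const_mul k₀).sub
          (HasFDerivAt.sum (u := Finset.univ) (fun k _ => HasFDerivAt.sum (u := Finset.univ)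
            (fun h _ => ((hc k).const_mul (W k h)).mul (hc h))))).const_mul (1/2 : ℝ)).mul_const (ω m a) |>.add
          ((hc m).mul (hc a))
        convert h using 1
        funext x
        simp [Finset.sum_apply])))
  rw [(hXa j).fderiv, (hXa i).fderiv, hX i p, hX j p]
  simp only [ContinuousLinearMap.prod_apply, ContinuousLinearMap.coe_comp',
    Function.comp_apply, ContinuousLinearMap.smul_apply, ContinuousLinearMap.add_apply,
    ContinuousLinearMap.sub_apply, ContinuousLinearMap.neg_apply, ContinuousLinearMap.sum_apply,
    ContinuousLinearMap.pi_apply, ContinuousLinearMap.proj_apply, ContinuousLinearMap.coe_fst',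
    ContinuousLinearMap.coe_snd', ContinuousLinearMap.zero_apply, smul_eq_mul, Prod.mk_sub_mk,
    Prod.mk.injEq]
  refine ⟨by simp, ?_, ?_⟩
  · rw [hF, hF, hω.apply i j]; ring
  · funext m
    simp only [Pi.sub_apply, ContinuousLinearMap.pi_apply, ContinuousLinearMap.coe_comp',
      Function.comp_apply, ContinuousLinearMap.smul_apply, ContinuousLinearMap.add_apply,
      ContinuousLinearMap.sub_apply, ContinuousLinearMap.neg_apply, ContinuousLinearMap.sum_apply,
      ContinuousLinearMap.proj_apply, ContinuousLinearMap.coe_fst',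
      ContinuousLinearMap.coe_snd', smul_eq_mul, hF]
    rw [ghss_aux n ω W hW hWω p.2.2 _ i, ghss_aux n ω W hW hWω p.2.2 _ j, hω.apply i j]
    ring
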